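/- Let g, h be permutations in S_n with |supp(g) ∩ supp(h)| = r ≥ 1, where supp denotes the set of non-fixed points. Writing ℓ(w) := |type(w)| − l(type(w)) for the minimal number of transpositions expressing w (type(w) being the cycle type with fixed points removed), one has ℓ(gh) ≥ ℓ(g) + ℓ(h) − 2r + 2. -/

import Mathlib

/-- `ℓ(w) = |type(w)| − l(type(w))`: the sum of the lengths of the nontrivial cycles of `w`
minus their number, i.e. the minimal number of transpositions expressing `w`. -/
def permLen {n : ℕ} (w : Equiv.Perm (Fin n)) : ℕ :=
  w.cycleType.sum - w.cycleType.card

open Equiv Equiv.Perm Finset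

variable {n : ℕ}

lemma permLen_card_le (w : Equiv.Perm (Fin n)) :
    Multiset.card w.cycleType ≤ w.cycleType.sum := by
  have := Multiset.card_nsmul_le_sum (s := w.cycleType) (a := 1)
    (fun x hx => le_trans (by norm_num) (Equiv.Perm.two_le_of_mem_cycleType hx))
  simpa using this

lemma permLen_int (w : Equiv.Perm (Fin n)) :
    (permLen w : ℤ) = (w.cycleType.sum : ℤ) - Multiset.card w.cycleType := by
  have := permLen_card_le w
  unfold permLen
  omega

lemma permLen_one : permLen (1 : Equiv.Perm (Fin n)) = 0 := by
  simp [permLen, Equiv.Perm.cycleType_one]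

lemma permLen_inv (w : Equiv.Perm (Fin n)) : permLen w⁻¹ = permLen w := by
  simp [permLen, Equiv.Perm.cycleType_inv]

lemma permLen_disjoint {u v : Equiv.Perm (Fin n)} (h : u.Disjoint v) :
    permLen (u * v) = permLen u + permLen v := by
  have h1 := permLen_card_le u
  have h2 := permLen_card_le v
  unfold permLen at *
  rw [h.cycleType_mul, Multiset.sum_add, Multiset.card_add]
  omega

lemma permLen_swap {a b : Fin n} (h : a ≠ b) : permLen (Equiv.swap a b) = 1 := by
  have : (Equiv.swap a b).IsCycle := Equiv.Perm.isCycle_swap h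
  rw [permLen, this.cycleType, Equiv.Perm.card_support_swap h]
  simp

lemma permLen_isCycle {c : Equiv.Perm (Fin n)} (h : c.IsCycle) :
    permLen c = c.support.card - 1 := by
  rw [permLen, h.cycleType]
  simp

/-- Lemma A -/
lemma permLen_swapMul {w : Equiv.Perm (Fin n)} {x : Fin n} (hx : w x ≠ x) :
    permLen (Equiv.swap x (w x) * w) + 1 = permLen w := by
  set c := w.cycleOf x with hcdef
  have hc : c ∈ w.cycleFactorsFinset := cycleOf_mem_cycleFactorsFinset_iff.2 (mem_support.2 hx)
  have hcyc : c.IsCycle := isCycle_cycleOf w hx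
  have hcx : c x = w x := w.cycleOf_apply_self x
  have hdis : Equiv.Perm.Disjoint (w * c⁻¹) c :=
    disjoint_mul_inv_of_mem_cycleFactorsFinset hc
  set d := w * c⁻¹ with hddef
  have hw : w = d * c := by rw [hddef, inv_mul_cancel_right]
  have hxc : x ∈ c.support := mem_support.2 (by rw [hcx]; exact hx)
  have hwxc : w x ∈ c.support := by rw [← hcx]; exact apply_mem_support.2 hxc
  have hxwx : x ≠ w x := Ne.symm hx
  have hswap_supp : (Equiv.swap x (w x)).support ⊆ c.support := by
    rw [support_swap hxwx]
    intro z hz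
    rcases Finset.mem_insert.1 hz with rfl | hz
    · exact hxc
    · rw [Finset.mem_singleton] at hz; subst hz; exact hwxc
  have hdisj_supp : _root_.Disjoint d.support c.support :=
    disjoint_iff_disjoint_support.1 hdis
  have hds : Equiv.Perm.Disjoint d (Equiv.swap x (w x)) :=
    disjoint_iff_disjoint_support.2 (hdisj_supp.mono_right hswap_supp)
  have hkey : Equiv.swap x (w x) * w = d * (Equiv.swap x (w x) * c) := by
    nth_rewrite 2 [hw]
    rw [← mul_assoc, ← hds.commute.eq, mul_assoc]
  have hcx' : c x ≠ x := by rw [hcx]; exact hx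
  have hk2 : 2 ≤ c.support.card := hcyc.two_le_card_support
  by_cases hccx : c (c x) = x
  · -- c is a swap
    have hceq : c = Equiv.swap x (c x) := hcyc.eq_swap_of_apply_apply_eq_self hcx' hccx
    have h1 : Equiv.swap x (w x) * c = 1 := by
      rw [← hcx]; nth_rewrite 2 [hceq]; rw [swap_mul_self]
    rw [hkey, h1, mul_one]
    have hlc : permLen c = 1 := by rw [hceq]; exact permLen_swap (Ne.symm hcx')
    rw [hw, permLen_disjoint hdis, hlc]
  · -- the cycle has length ≥ 3
    have hccx' : c (c x) ≠ x := hccx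
    have hcyc2 : (Equiv.swap x (c x) * c).IsCycle := hcyc.swap_mul hcx' hccx'
    have hsupp2 : (Equiv.swap x (c x) * c).support = c.support \ {x} :=
      support_swap_mul_eq c x hccx'
    have hcard2 : (Equiv.swap x (c x) * c).support.card = c.support.card - 1 := by
      rw [hsupp2, Finset.sdiff_singleton_eq_erase, Finset.card_erase_of_mem hxc]
    have hk3 : 3 ≤ c.support.card := by
      have := hcyc2.two_le_card_support
      omega
    have hds2 : Equiv.Perm.Disjoint d (Equiv.swap x (c x) * c) := by
      apply disjoint_iff_disjoint_support.2
      apply hdisj_supp.mono_right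
      rw [hsupp2]
      exact Finset.sdiff_subset
    have e1 : permLen (Equiv.swap x (w x) * w) = permLen d + (c.support.card - 2) := by
      rw [hkey, ← hcx, permLen_disjoint hds2, permLen_isCycle hcyc2, hcard2]
      omega
    have e2 : permLen w = permLen d + (c.support.card - 1) := by
      rw [hw, permLen_disjoint hdis, permLen_isCycle hcyc]
    rw [e1, e2]
    omega

/-- Lemma A' : right multiplication version -/
lemma permLen_mulSwap {w : Equiv.Perm (Fin n)} {x : Fin n} (hx : w x ≠ x) :
    permLen (w * Equiv.swap x (w⁻¹ x)) + 1 = permLen w := by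
  have hx' : w⁻¹ x ≠ x := by
    intro h
    apply hx
    conv_lhs => rw [← h]
    simp only [Equiv.Perm.coe_inv, Equiv.apply_symm_apply]
  have h := permLen_swapMul (w := w⁻¹) (x := x) hx'
  rw [permLen_inv] at h
  have h2 : Equiv.swap x (w⁻¹ x) * w⁻¹ = (w * Equiv.swap x (w⁻¹ x))⁻¹ := by
    rw [mul_inv_rev, swap_inv]
  rw [h2, permLen_inv] at h
  exact h

/-- Lemma B : absorbing a new point into a cycle -/
lemma permLen_mulSwap_fixed {g : Equiv.Perm (Fin n)} {x y : Fin n}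
    (hx : g x ≠ x) (hy : g y = y) :
    permLen (g * Equiv.swap x y) = permLen g + 1 := by
  have hxy : x ≠ y := by rintro rfl; exact hx hy
  set u := g * Equiv.swap x y with hu
  have hgxy : g x ≠ y := by
    intro h
    exact hxy (g.injective (h.trans hy.symm))
  have huy : u y = g x := by
    rw [hu, mul_apply, swap_apply_right]
  have huy' : u y ≠ y := by rw [huy]; exact hgxy
  have hui : u⁻¹ y = x := by
    rw [hu, mul_inv_rev, mul_apply, swap_inv]
    have hgy : g⁻¹ y = y := g.injective (by simp only [Equiv.Perm.coe_inv, Equiv.apply_symm_apply, hy])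
    rw [hgy, swap_apply_right]
  have := permLen_mulSwap (w := u) (x := y) huy'
  rw [hui, swap_comm y x] at this
  have hgu : u * Equiv.swap x y = g := by
    rw [hu, mul_assoc, swap_mul_self, mul_one]
  rw [hgu] at this
  omega

/-- Lemma E : easy bound when one of the swapped points is fixed -/
lemma permLen_mulSwap_le_fixed {v : Equiv.Perm (Fin n)} {c y : Fin n}
    (hy : v y = y) (hcy : c ≠ y) :
    permLen (v * Equiv.swap c y) ≤ permLen v + 1 := by
  by_cases hc : v c = c
  · have hdis : Equiv.Perm.Disjoint v (Equiv.swap c y) := by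
      intro z
      by_cases hz : z = c
      · subst hz; exact Or.inl hc
      by_cases hz' : z = y
      · subst hz'; exact Or.inl hy
      · exact Or.inr (swap_apply_of_ne_of_ne hz hz')
    rw [permLen_disjoint hdis, permLen_swap hcy]
  · rw [permLen_mulSwap_fixed hc hy]

lemma permLen_eq_zero {u : Equiv.Perm (Fin n)} (h : permLen u = 0) : u = 1 := by
  have h2 : 2 * Multiset.card u.cycleType ≤ u.cycleType.sum := by
    have := Multiset.card_nsmul_le_sum (s := u.cycleType) (a := 2)
      (fun x hx => Equiv.Perm.two_le_of_mem_cycleType hx)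
    simpa [mul_comm] using this
  have hc : Multiset.card u.cycleType = 0 := by
    unfold permLen at h; omega
  rw [Multiset.card_eq_zero] at hc
  exact Equiv.Perm.cycleType_eq_zero.1 hc

lemma permLen_mulSwap_le_aux :
    ∀ (m : ℕ) (u : Equiv.Perm (Fin n)) (a b : Fin n), a ≠ b → permLen u ≤ m →
      permLen (u * Equiv.swap a b) ≤ permLen u + 1 := by
  intro m
  induction m with
  | zero =>
    intro u a b hab hm
    have hu1 : u = 1 := permLen_eq_zero (Nat.le_zero.1 hm)
    subst hu1
    rw [one_mul, permLen_swap hab]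
    exact Nat.le_add_left 1 _
  | succ m IH =>
    intro u a b hab hm
    by_cases hb : u b = b
    · exact permLen_mulSwap_le_fixed hb hab
    by_cases ha : u a = a
    · rw [swap_comm]
      exact permLen_mulSwap_le_fixed ha (Ne.symm hab)
    -- both a and b in the support
    set e := u⁻¹ b with he
    have hue : u e = b := by rw [he]; simp only [Equiv.Perm.coe_inv, Equiv.apply_symm_apply]
    have hbe : b ≠ e := by
      rw [he]; intro hh
      apply hb; conv_lhs => rw [hh]
      simp only [Equiv.Perm.coe_inv, Equiv.apply_symm_apply]
    set u' := u * Equiv.swap b e with hu'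
    have hlen' : permLen u' + 1 = permLen u := permLen_mulSwap hb
    have hu'b : u' b = b := by rw [hu', mul_apply, swap_apply_left, hue]
    have huu : u = u' * Equiv.swap b e := by
      rw [hu', mul_assoc, swap_mul_self, mul_one]
    by_cases hea : e = a
    · -- u * swap a b = u'
      have hth : u * Equiv.swap a b = u' := by
        rw [huu, hea, mul_assoc, swap_comm b a, swap_mul_self, mul_one]
      rw [hth]
      omega
    · have habe : Equiv.swap b e * Equiv.swap a b = Equiv.swap a e * Equiv.swap e b := by
        have hba : b ≠ a := Ne.symm hab
        have hae : a ≠ e := Ne.symm hea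
        have heb : e ≠ b := Ne.symm hbe
        ext z
        simp only [mul_apply]
        by_cases hza : z = a
        · subst hza
          simp only [swap_apply_left]
          rw [swap_apply_of_ne_of_ne hae hab, swap_apply_left]
        by_cases hzb : z = b
        · subst hzb
          simp only [swap_apply_right]
          rw [swap_apply_of_ne_of_ne hab hae]
        by_cases hze : z = e
        · subst hze
          rw [swap_apply_of_ne_of_ne hea heb, swap_apply_right, swap_apply_left,
            swap_apply_of_ne_of_ne hba hbe]
        · rw [swap_apply_of_ne_of_ne hza hzb, swap_apply_of_ne_of_ne hzb hze,
            swap_apply_of_ne_of_ne hze hzb, swap_apply_of_ne_of_ne hza hze]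
      have hdec : u * Equiv.swap a b = (u' * Equiv.swap a e) * Equiv.swap e b := by
        rw [huu, mul_assoc, habe, ← mul_assoc, mul_assoc]
      have h1 : permLen (u' * Equiv.swap a e) ≤ permLen u' + 1 :=
        IH u' a e (Ne.symm hea) (by omega)
      have h2 : (u' * Equiv.swap a e) b = b := by
        rw [mul_apply, swap_apply_of_ne_of_ne (Ne.symm hab) hbe, hu'b]
      have h3 : permLen ((u' * Equiv.swap a e) * Equiv.swap e b) ≤
          permLen (u' * Equiv.swap a e) + 1 :=
        permLen_mulSwap_le_fixed h2 (fun hh => hbe hh.symm)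
      rw [hdec]
      omega

/-- Lemma C -/
lemma permLen_mulSwap_le (u : Equiv.Perm (Fin n)) {a b : Fin n} (hab : a ≠ b) :
    permLen (u * Equiv.swap a b) ≤ permLen u + 1 :=
  permLen_mulSwap_le_aux (permLen u) u a b hab le_rfl

lemma permLen_main : ∀ (m : ℕ) (g h : Equiv.Perm (Fin n)), h.support.card ≤ m →
    (permLen g : ℤ) + permLen h - 2 * ((g.support ∩ h.support).card : ℤ)
      + 2 * (min ((g.support ∩ h.support).card) 1 : ℕ) ≤ permLen (g * h) := by
  intro m
  induction m with
  | zero =>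
    intro g h hm
    have h1 : h = 1 := support_eq_empty_iff.1 (Finset.card_eq_zero.1 (Nat.le_zero.1 hm))
    subst h1
    simp only [mul_one, support_one, Finset.inter_empty, Finset.card_empty, permLen_one]
    omega
  | succ m IH =>
    intro g h hm
    by_cases hint : g.support ∩ h.support = ∅
    · have hdis : g.Disjoint h :=
        disjoint_iff_disjoint_support.2 (Finset.disjoint_iff_inter_eq_empty.2 hint)
      rw [permLen_disjoint hdis, hint]
      simp only [Finset.card_empty]
      omega
    · obtain ⟨x, hx⟩ := Finset.nonempty_iff_ne_empty.2 hint
      rw [Finset.mem_inter] at hx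
      have hgx : g x ≠ x := mem_support.1 hx.1
      have hhx : h x ≠ x := mem_support.1 hx.2
      set S := g.support ∩ h.support with hS
      set τ := Equiv.swap x (h x) with hτ
      set h₁ := τ * h with hh1
      set g₁ := g * τ with hg1
      have hgh : g₁ * h₁ = g * h := by
        rw [hg1, hh1, mul_assoc, hτ, swap_mul_self_mul]
      have hlh : permLen h₁ + 1 = permLen h := permLen_swapMul hhx
      have hcard : h₁.support.card ≤ m := by
        have hcs := card_support_swap_mul hhx
        rw [← hτ, ← hh1] at hcs
        omega
      have IH' := IH g₁ h₁ hcard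
      rw [hgh] at IH'
      have hsub : ∀ z ∈ g₁.support ∩ h₁.support, z = h x ∨ (z ∈ S ∧ z ≠ x) := by
        intro z hz
        rw [Finset.mem_inter] at hz
        have hzh : z ∈ h.support ∧ z ≠ x :=
          mem_support_swap_mul_imp_mem_support_ne (f := h) (x := x) hz.2
        by_cases hzhx : z = h x
        · exact Or.inl hzhx
        · refine Or.inr ⟨Finset.mem_inter.2 ⟨?_, hzh.1⟩, hzh.2⟩
          have hgz : g₁ z = g z := by
            rw [hg1, mul_apply, hτ, swap_apply_of_ne_of_ne hzh.2 hzhx]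
          exact mem_support.2 (by rw [← hgz]; exact mem_support.1 hz.1)
      have hxS : x ∈ S := Finset.mem_inter.2 ⟨hx.1, hx.2⟩
      have hpos : 1 ≤ S.card := Finset.card_pos.2 ⟨x, hxS⟩
      by_cases hcase : h x ∈ g.support
      · -- case (i) : h x in the support of g
        have hhxS : h x ∈ S := Finset.mem_inter.2 ⟨hcase, apply_mem_support.2 hx.2⟩
        have hS1 : g₁.support ∩ h₁.support ⊆ S.erase x := by
          intro z hz
          rcases hsub z hz with rfl | ⟨hzS, hzx⟩
          · exact Finset.mem_erase.2 ⟨hhx, hhxS⟩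
          · exact Finset.mem_erase.2 ⟨hzx, hzS⟩
        have hR1 : (g₁.support ∩ h₁.support).card + 1 ≤ S.card := by
          have hc := Finset.card_le_card hS1
          rw [Finset.card_erase_of_mem hxS] at hc
          omega
        have hR2 : 2 ≤ S.card := by
          have hsub2 : ({x, h x} : Finset (Fin n)) ⊆ S := by
            intro z hz
            rcases Finset.mem_insert.1 hz with rfl | hz
            · exact hxS
            · rw [Finset.mem_singleton] at hz; subst hz; exact hhxS
          have hc := Finset.card_le_card hsub2
          rwa [Finset.card_pair (Ne.symm hhx)] at hc
        have hg1len : permLen g ≤ permLen g₁ + 1 := by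
          have hgg : g = g₁ * τ := by rw [hg1, mul_assoc, hτ, swap_mul_self, mul_one]
          conv_lhs => rw [hgg]
          exact permLen_mulSwap_le g₁ (Ne.symm hhx)
        omega
      · -- case (ii) : h x not in the support of g
        have hghx : g (h x) = h x := notMem_support.1 hcase
        have hg1len : permLen g₁ = permLen g + 1 := permLen_mulSwap_fixed hgx hghx
        have hS1 : g₁.support ∩ h₁.support ⊆ insert (h x) (S.erase x) := by
          intro z hz
          rcases hsub z hz with rfl | ⟨hzS, hzx⟩
          · exact Finset.mem_insert_self _ _
          · exact Finset.mem_insert_of_mem (Finset.mem_erase.2 ⟨hzx, hzS⟩)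
        have hR1 : (g₁.support ∩ h₁.support).card ≤ S.card := by
          have h1 := Finset.card_le_card hS1
          have h2 := Finset.card_insert_le (h x) (S.erase x)
          rw [Finset.card_erase_of_mem hxS] at h2
          omega
        omega


/-- If `g, h ∈ S_n` have supports intersecting in exactly `r ≥ 1` points, then
`ℓ(gh) ≥ ℓ(g) + ℓ(h) − 2r + 2`. -/
theorem permLen_mul_ge {n : ℕ} (g h : Equiv.Perm (Fin n)) (r : ℕ)
    (hr : (g.support ∩ h.support).card = r) (hr1 : 1 ≤ r) :
    (permLen (g * h) : ℤ) ≥ permLen g + permLen h - 2 * r + 2 := by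
  have := permLen_main h.support.card g h le_rfl
  rw [hr] at this
  have hmin : min r 1 = 1 := by omega
  rw [hmin] at this
  push_cast at this ⊢
  linarith
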